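/- Let j ∈ {1,2}. Assume the real-valued noise ε is ordinary smooth, i.e. there exist r, c_ε, C_ε > 0 with c_ε(1 + |t|)^{-r} ≤ |f_ε*(t)| ≤ C_ε(1 + |t|)^{-r} for all t ∈ ℝ, with r > 1, and assume the kernel K satisfies ∫|K*(t)|(1 + |t|)^r dt < √C_{(K*)} and ∫|K*(t)|²(1 + |t|)^{2r} dt < C_{(K*)} for some C_{(K*)} > 0. Then for every 0 < h_j ≤ 1, Ṽ₀(n, h_j) ≤ (C/((2π)²)) n^{-1} h_j^{-1 - 2r}, with C := c_ε^{-2} C_{(K*)} max{‖f_ε*‖_{L¹(ℝ)}, 1}. -/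

import Mathlib

open MeasureTheory ProbabilityTheory Real Finset

noncomputable section

/-- Two-argument arctangent, as defined in the paper (taking values in `[-π, π]`). -/
def atan2 (w₁ w₂ : ℝ) : ℝ :=
  if w₂ = 0 then (if 0 < w₁ then π / 2 else if w₁ < 0 then -(π / 2) else 0)
  else if 0 < w₂ then Real.arctan (w₁ / w₂)
  else if 0 < w₁ then Real.arctan (w₁ / w₂) + π
  else Real.arctan (w₁ / w₂) - π

/-- The circular divergence `d_c(θ₁, θ₂) = 1 - cos(θ₁ - θ₂)`. -/
def dc (θ₁ θ₂ : ℝ) : ℝ := 1 - Real.cos (θ₁ - θ₂)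

/-- The quantity `δ` of Assumption 1 at a point, built from the values of `m₁` and `m₂`. -/
def deltaAt (w₁ w₂ : ℝ) : ℝ :=
  if w₁ ≠ 0 ∧ w₂ ≠ 0 then min |w₁| |w₂| else if w₂ = 0 then |w₁| else |w₂|

/-- Fourier transform `f⋆(t) = ∫ e^{ixt} f(x) dx` of a function on `ℝ`. -/
def ft (f : ℝ → ℝ) (t : ℝ) : ℂ :=
  ∫ x : ℝ, Complex.exp (Complex.I * (t : ℂ) * (x : ℂ)) * (f x : ℂ)

/-- Rescaled kernel `K_h = (1/h) K(·/h)`. -/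
def Kh (K : ℝ → ℝ) (h : ℝ) : ℝ → ℝ := fun y => (1 / h) * K (y / h)

/-- Convolution `f * g (x) = ∫ f(x - y) g(y) dy` on `ℝ`. -/
def conv (f g : ℝ → ℝ) (x : ℝ) : ℝ := ∫ y : ℝ, f (x - y) * g y

/-- Sup norm `‖f‖_∞ = sup_y |f(y)|`. -/
def supnorm (f : ℝ → ℝ) : ℝ := ⨆ y : ℝ, |f y|

open Classical in
/-- `M(K)`: the `L¹` norm of `K` when `K` is integrable, otherwise `‖K⋆‖_∞`. -/
def MK (K : ℝ → ℝ) (Kstar : ℝ → ℂ) : ℝ :=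
  if Integrable K volume then ∫ y : ℝ, |K y| else ⨆ t : ℝ, ‖Kstar t‖

/-- Sup norm of `K⋆`. -/
def supKstar (Kstar : ℝ → ℂ) : ℝ := ⨆ t : ℝ, ‖Kstar t‖

/-- Ordinary smooth noise on `ℝ` of index `r`. -/
def linOS (fε : ℝ → ℝ) (r cε Cε : ℝ) : Prop :=
  ∀ t : ℝ, cε * (1 + |t|) ^ (-r) ≤ ‖ft fε t‖ ∧
    ‖ft fε t‖ ≤ Cε * (1 + |t|) ^ (-r)

/-- Supersmooth noise on `ℝ`. -/
def linSS (fε : ℝ → ℝ) (cε Cε γ ρ ρ₀ ρ₁ : ℝ) : Prop :=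
  ∀ t : ℝ, cε * (1 + |t| ^ 2) ^ (-ρ₀ / 2) * Real.exp (-γ * |t| ^ ρ) ≤ ‖ft fε t‖ ∧
    ‖ft fε t‖ ≤ Cε * (1 + |t| ^ 2) ^ (-ρ₁ / 2) * Real.exp (-γ * |t| ^ ρ)

/-- Membership in the Hölder class `H(β, Λ)` of functions on `(0,1)`. -/
def memHolder (f : ℝ → ℝ) (β Λ : ℝ) : Prop :=
  ContDiffOn ℝ (⌊β⌋₊ : ℕ∞) f (Set.Ioo 0 1) ∧
    ∀ y ∈ Set.Ioo (0 : ℝ) 1, ∀ z ∈ Set.Ioo (0 : ℝ) 1,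
      |iteratedDerivWithin ⌊β⌋₊ f (Set.Ioo 0 1) z - iteratedDerivWithin ⌊β⌋₊ f (Set.Ioo 0 1) y| ≤
        Λ * |z - y| ^ (β - (⌊β⌋₊ : ℝ))

/-- The constant `C_{K,κ} = ∫ (1+|y|)^κ |K(y)| dy`. -/
def CKkappa (K : ℝ → ℝ) (κ : ℝ) : ℝ := ∫ y : ℝ, (1 + |y|) ^ κ * |K y|

/-- `K` is a kernel of order `κ`. -/
def kernelOrder (K : ℝ → ℝ) (κ : ℝ) : Prop :=
  Integrable (fun y => (1 + |y|) ^ κ * |K y|) ∧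
    ∀ k : ℕ, 1 ≤ k → k ≤ ⌊κ⌋₊ → (∫ y : ℝ, y ^ k * K y) = 0

/-- Noise-compatibility assumption on `K⋆` (ordinary smooth case), with constant `C_{(K⋆)}`:
`∫|K⋆(t)|(1+|t|)^r dt < √C_{(K⋆)}` and `∫|K⋆(t)|²(1+|t|)^{2r} dt < C_{(K⋆)}`. -/
def KstarCompat (Kstar : ℝ → ℂ) (r CKs : ℝ) : Prop :=
  Integrable (fun t : ℝ => ‖Kstar t‖ * (1 + |t|) ^ r) ∧
  Integrable (fun t : ℝ => ‖Kstar t‖ ^ 2 * (1 + |t|) ^ (2 * r)) ∧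
  (∫ t : ℝ, ‖Kstar t‖ * (1 + |t|) ^ r) < Real.sqrt CKs ∧
  (∫ t : ℝ, ‖Kstar t‖ ^ 2 * (1 + |t|) ^ (2 * r)) < CKs

/-- The linear-predictor errors-in-variables regression model:
`Θ_k = m(X_k) + ζ_k (mod 2π)` with `X_k ∈ [0,1]`, `Z_k = X_k + ε_k`, with
`m = atan2(m₁, m₂)`, `m₁(x) = E[sin Θ | X = x]`, `m₂(x) = E[cos Θ | X = x]`,
the `(X_k, ζ_k, ε_k)` i.i.d., `ε_k` real-valued with density `fε`, independent of `X_k`. -/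
structure LinModel (Ω : Type*) [MeasurableSpace Ω] (μ : Measure Ω) (n : ℕ) where
  X : Fin n → Ω → ℝ
  Θ : Fin n → Ω → ℝ
  Z : Fin n → Ω → ℝ
  ζ : Fin n → Ω → ℝ
  ε : Fin n → Ω → ℝ
  m₁ : ℝ → ℝ
  m₂ : ℝ → ℝ
  fX : ℝ → ℝ
  fε : ℝ → ℝ
  measX : ∀ k, Measurable (X k)
  measΘ : ∀ k, Measurable (Θ k)
  measZ : ∀ k, Measurable (Z k)
  measζ : ∀ k, Measurable (ζ k)
  measε : ∀ k, Measurable (ε k)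
  measm₁ : Measurable m₁
  measm₂ : Measurable m₂
  measfX : Measurable fX
  measfε : Measurable fε
  intfε : Integrable fε
  hXrange : ∀ k ω, X k ω ∈ Set.Icc (0 : ℝ) 1
  hζrange : ∀ k ω, ζ k ω ∈ Set.Ico (-π) π
  hΘ : ∀ k ω, Θ k ω = toIcoMod Real.two_pi_pos (-π) (atan2 (m₁ (X k ω)) (m₂ (X k ω)) + ζ k ω)
  hZ : ∀ k ω, Z k ω = X k ω + ε k ω
  iid : ∀ j k, IdentDistrib (fun ω => (X j ω, ζ j ω, ε j ω)) (fun ω => (X k ω, ζ k ω, ε k ω)) μ μ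
  indep : iIndepFun (fun k ω => (X k ω, ζ k ω, ε k ω)) μ
  indepXε : ∀ k, IndepFun (X k) (ε k) μ
  εdensity : ∀ k, Measure.map (ε k) μ = volume.withDensity fun x => ENNReal.ofReal (fε x)
  Xdensity : ∀ k, Measure.map (X k) μ =
    (volume.restrict (Set.Icc (0 : ℝ) 1)).withDensity fun x => ENNReal.ofReal (fX x)
  hm₁ : ∀ k, (fun ω => m₁ (X k ω)) =ᵐ[μ]
    μ[(fun ω => Real.sin (Θ k ω)) | MeasurableSpace.comap (X k) inferInstance]
  hm₂ : ∀ k, (fun ω => m₂ (X k ω)) =ᵐ[μ]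
    μ[(fun ω => Real.cos (Θ k ω)) | MeasurableSpace.comap (X k) inferInstance]

namespace LinModel

variable {Ω : Type*} [MeasurableSpace Ω] {μ : Measure Ω} {n : ℕ}

/-- `p₁ = m₁ · fX`. -/
def p₁ (M : LinModel Ω μ n) : ℝ → ℝ := fun x => M.m₁ x * M.fX x

/-- `p₂ = m₂ · fX`. -/
def p₂ (M : LinModel Ω μ n) : ℝ → ℝ := fun x => M.m₂ x * M.fX x

/-- The regression function `m = atan2(m₁, m₂)`. -/
def mfun (M : LinModel Ω μ n) : ℝ → ℝ := fun x => atan2 (M.m₁ x) (M.m₂ x)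

/-- The deconvolution kernel estimator `p̂_{s,h}(x)` (with `s = sin` for `p₁`, `s = cos`
for `p₂`), where `Kstar` is the Fourier transform of the kernel `K` (`K_h⋆(t) = K⋆(th)`). -/
def hatP (M : LinModel Ω μ n) (s : ℝ → ℝ) (Kstar : ℝ → ℂ) (h x : ℝ) (ω : Ω) : ℂ :=
  (1 / (n : ℂ)) * ∑ k : Fin n, (s (M.Θ k ω) : ℂ) *
    (((1 / (2 * π) : ℝ) : ℂ) * ∫ t : ℝ,
      Complex.exp (-(Complex.I * (t : ℂ) * (x : ℂ))) *
        Complex.exp (Complex.I * (t : ℂ) * (M.Z k ω : ℂ)) * Kstar (t * h) / ft M.fε t)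

/-- The doubly-smoothed estimator `p̂_{s,h,h'}(x) = (K_{h'} ∗ p̂_{s,h})(x)`. -/
def hatPP (M : LinModel Ω μ n) (s K : ℝ → ℝ) (Kstar : ℝ → ℂ) (h h' x : ℝ) (ω : Ω) : ℂ :=
  ∫ y : ℝ, ((Kh K h' y : ℝ) : ℂ) * M.hatP s Kstar h (x - y) ω

end LinModel

/-- Expectation of a complex-valued statistic. -/
def cmean {Ω : Type*} [MeasurableSpace Ω] (μ : Measure Ω) (W : Ω → ℂ) : ℂ := ∫ ω, W ω ∂μ

/-- Variance (pointwise risk around the mean) of a complex-valued statistic. -/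
def cvar {Ω : Type*} [MeasurableSpace Ω] (μ : Measure Ω) (W : Ω → ℂ) : ℝ :=
  ∫ ω, ‖W ω - cmean μ W‖ ^ 2 ∂μ

/-- The variance bound `Ṽ₀(n, h)`. -/
def VtildeZero (Kstar : ℝ → ℂ) (fε : ℝ → ℝ) (n : ℕ) (h : ℝ) : ℝ :=
  (1 / ((2 * π) ^ 2 * n)) *
    min ((∫ t : ℝ, ‖Kstar (t * h) / ft fε t‖ ^ 2) * (∫ t : ℝ, ‖ft fε t‖))
      ((∫ t : ℝ, ‖Kstar (t * h) / ft fε t‖) ^ 2)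

/-- The penalized variance term `Ṽ(n, h) = c₀ log(n) Ṽ₀(n, h)`. -/
def Vtilde (c0 : ℝ) (Kstar : ℝ → ℂ) (fε : ℝ → ℝ) (n : ℕ) (h : ℝ) : ℝ :=
  c0 * Real.log n * VtildeZero Kstar fε n h

/-- The collection of bandwidths `𝓗`. -/
def calH (Kstar : ℝ → ℂ) (fε : ℝ → ℝ) (n : ℕ) : Set ℝ :=
  {h | ∃ k : ℕ, 1 ≤ k ∧ k ≤ n ∧ h = 1 / (k : ℝ) ∧
    Real.log n / n ≤ (∫ t : ℝ, ‖Kstar (t * h) / ft fε t‖ ^ 2) /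
      (∫ t : ℝ, ‖Kstar (t * h) / ft fε t‖) ^ 2}

namespace LinModel

variable {Ω : Type*} [MeasurableSpace Ω] {μ : Measure Ω} {n : ℕ}

/-- The Goldenshluger–Lepski quantity `Ã(h, x)`. -/
def GLA (M : LinModel Ω μ n) (s K : ℝ → ℝ) (Kstar : ℝ → ℂ) (c0 : ℝ) (h x : ℝ) (ω : Ω) : ℝ :=
  sSup {v | ∃ h' ∈ calH Kstar M.fε n,
    v = max (‖M.hatPP s K Kstar h h' x ω - M.hatP s Kstar h' x ω‖ -
      Real.sqrt (Vtilde c0 Kstar M.fε n h')) 0}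

/-- `hhat` is a data-driven Goldenshluger–Lepski selected bandwidth:
for each sample point it minimizes `Ã(h, x) + √Ṽ(n, h)` over `𝓗`. -/
def isGLSelection (M : LinModel Ω μ n) (s K : ℝ → ℝ) (Kstar : ℝ → ℂ) (c0 x : ℝ)
    (hhat : Ω → ℝ) : Prop :=
  ∀ ω, hhat ω ∈ calH Kstar M.fε n ∧ ∀ h ∈ calH Kstar M.fε n,
    M.GLA s K Kstar c0 (hhat ω) x ω + Real.sqrt (Vtilde c0 Kstar M.fε n (hhat ω)) ≤
      M.GLA s K Kstar c0 h x ω + Real.sqrt (Vtilde c0 Kstar M.fε n h)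

end LinModel
/-- bound on `Ṽ₀(n, h)` under ordinary smooth noise with `r > 1`:
`Ṽ₀(n, h) ≤ (C/(2π)²) n⁻¹ h^{-1-2r}` with `C = c_ε⁻² C_{(K⋆)} max{‖fε⋆‖_{L¹}, 1}`. -/
theorem statement13 (fε : ℝ → ℝ) (r cε Cε : ℝ)
    (hcε : 0 < cε) (hCε : 0 < Cε) (hr : 1 < r) (hOS : linOS fε r cε Cε)
    (K : ℝ → ℝ) (Kstar : ℝ → ℂ)
    (hKint : Integrable K) (hKone : (∫ y : ℝ, K y) = 1)
    (hKstar : ∀ t, Kstar t = ft K t)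
    (CKs : ℝ) (hCKs : 0 < CKs) (hcompat : KstarCompat Kstar r CKs)
    (n : ℕ) (j : Fin 2) (h : ℝ) (hh0 : 0 < h) (hh1 : h ≤ 1) :
    VtildeZero Kstar fε n h ≤
      ((cε ^ 2)⁻¹ * CKs * max (∫ t : ℝ, ‖ft fε t‖) 1) / (2 * π) ^ 2 *
        (n : ℝ)⁻¹ * h ^ (-1 - 2 * r) := by

  classical
  set B := ∫ t : ℝ, ‖ft fε t‖ with hBdef
  have hB0 : 0 ≤ B := integral_nonneg fun t => norm_nonneg _
  have hr0 : (0:ℝ) < r := by linarith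
  -- pointwise bound on |Kstar(th)/ft fε t|
  have hfεpos : ∀ t : ℝ, 0 < ‖ft fε t‖ := by
    intro t
    have h1 := (hOS t).1
    have h2 : 0 < cε * (1 + |t|) ^ (-r) :=
      mul_pos hcε (Real.rpow_pos_of_pos (by positivity) _)
    linarith
  have key : ∀ t : ℝ,
      ‖Kstar (t * h) / ft fε t‖ ≤
        cε⁻¹ * h ^ (-r) * (‖Kstar (t * h)‖ * (1 + |t * h|) ^ r) := by
    intro t
    rw [norm_div]
    have hlow := (hOS t).1
    have hpos : 0 < cε * (1 + |t|) ^ (-r) :=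
      mul_pos hcε (Real.rpow_pos_of_pos (by positivity) _)
    have step1 : ‖Kstar (t * h)‖ / ‖ft fε t‖ ≤
        ‖Kstar (t * h)‖ / (cε * (1 + |t|) ^ (-r)) :=
      div_le_div_of_nonneg_left (norm_nonneg _) hpos hlow
    have step2 : ‖Kstar (t * h)‖ / (cε * (1 + |t|) ^ (-r)) =
        cε⁻¹ * ((1 + |t|) ^ r * ‖Kstar (t * h)‖) := by
      rw [Real.rpow_neg (by positivity)]
      field_simp
    have step3 : (1 + |t|) ^ r ≤ h ^ (-r) * (1 + |t * h|) ^ r := by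
      have hle : 1 + |t| ≤ h⁻¹ * (1 + |t * h|) := by
        rw [abs_mul, abs_of_pos hh0]
        have e : h⁻¹ * (1 + |t| * h) = h⁻¹ + |t| := by field_simp
        have hinv : (1:ℝ) ≤ h⁻¹ := by
          rw [← one_div]; exact (le_div_iff₀ hh0).mpr (by linarith)
        rw [e]; linarith
      calc (1 + |t|) ^ r ≤ (h⁻¹ * (1 + |t * h|)) ^ r :=
            Real.rpow_le_rpow (by positivity) hle hr0.le
        _ = h⁻¹ ^ r * (1 + |t * h|) ^ r :=
            Real.mul_rpow (by positivity) (by positivity)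
        _ = h ^ (-r) * (1 + |t * h|) ^ r := by
            rw [Real.inv_rpow hh0.le, ← Real.rpow_neg hh0.le]
    calc ‖Kstar (t * h)‖ / ‖ft fε t‖
        ≤ cε⁻¹ * ((1 + |t|) ^ r * ‖Kstar (t * h)‖) := by
          rw [← step2]; exact step1
      _ ≤ cε⁻¹ * ((h ^ (-r) * (1 + |t * h|) ^ r) * ‖Kstar (t * h)‖) := by
          apply mul_le_mul_of_nonneg_left _ (by positivity)
          exact mul_le_mul_of_nonneg_right step3 (norm_nonneg _)
      _ = cε⁻¹ * h ^ (-r) * (‖Kstar (t * h)‖ * (1 + |t * h|) ^ r) := by ring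
  -- squared pointwise bound
  set g : ℝ → ℝ := fun t => ‖Kstar t‖ ^ 2 * (1 + |t|) ^ (2 * r) with hgdef
  have keysq : ∀ t : ℝ,
      ‖Kstar (t * h) / ft fε t‖ ^ 2 ≤
        (cε ^ 2)⁻¹ * h ^ (-(2 * r)) * g (t * h) := by
    intro t
    have h1 := pow_le_pow_left₀ (norm_nonneg _) (key t) 2
    refine h1.trans_eq ?_
    have e1 : (h ^ (-r)) ^ 2 = h ^ (-(2 * r)) := by
      rw [← Real.rpow_natCast (h ^ (-r)) 2, ← Real.rpow_mul hh0.le]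
      congr 1; push_cast; ring
    have e2 : ((1 + |t * h|) ^ r) ^ 2 = (1 + |t * h|) ^ (2 * r) := by
      rw [← Real.rpow_natCast ((1 + |t * h|) ^ r) 2, ← Real.rpow_mul (by positivity)]
      congr 1; push_cast; ring
    simp only [hgdef]
    rw [mul_pow, mul_pow, mul_pow, e1, e2, inv_pow]
    try ring
  -- integrability of the majorant
  have hgint : Integrable g := hcompat.2.1
  have hgcomp : Integrable (fun t => g (t * h)) := hgint.comp_mul_right' (ne_of_gt hh0)
  -- bound on A
  have hA : (∫ t : ℝ, ‖Kstar (t * h) / ft fε t‖ ^ 2) ≤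
      (cε ^ 2)⁻¹ * h ^ (-(2 * r)) * (h⁻¹ * CKs) := by
    have step : (∫ t : ℝ, ‖Kstar (t * h) / ft fε t‖ ^ 2) ≤
        ∫ t : ℝ, (cε ^ 2)⁻¹ * h ^ (-(2 * r)) * g (t * h) := by
      refine integral_mono_of_nonneg (Filter.Eventually.of_forall fun t => by positivity)
        (hgcomp.const_mul _) (Filter.Eventually.of_forall keysq)
    rw [integral_const_mul, Measure.integral_comp_mul_right g h] at step
    refine step.trans ?_
    have : |h⁻¹| • ∫ y : ℝ, g y ≤ h⁻¹ * CKs := by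
      rw [abs_of_pos (by positivity), smul_eq_mul]
      exact mul_le_mul_of_nonneg_left (le_of_lt hcompat.2.2.2) (by positivity)
    exact mul_le_mul_of_nonneg_left this (by positivity)
  -- assemble
  have hmin : min ((∫ t : ℝ, ‖Kstar (t * h) / ft fε t‖ ^ 2) * B)
      ((∫ t : ℝ, ‖Kstar (t * h) / ft fε t‖) ^ 2) ≤
      ((cε ^ 2)⁻¹ * h ^ (-(2 * r)) * (h⁻¹ * CKs)) * max B 1 := by
    refine (min_le_left _ _).trans ?_
    have hA0 : 0 ≤ ∫ t : ℝ, ‖Kstar (t * h) / ft fε t‖ ^ 2 :=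
      integral_nonneg fun t => by positivity
    exact mul_le_mul hA (le_max_left _ _) hB0 (by positivity)
  have hpow : h ^ (-1 - 2 * r) = h⁻¹ * h ^ (-(2 * r)) := by
    rw [show (-1 - 2 * r) = (-1) + (-(2 * r)) by ring, Real.rpow_add hh0,
      Real.rpow_neg_one]
  unfold VtildeZero
  calc (1 / ((2 * π) ^ 2 * n)) *
      min ((∫ t : ℝ, ‖Kstar (t * h) / ft fε t‖ ^ 2) * (∫ t : ℝ, ‖ft fε t‖))
        ((∫ t : ℝ, ‖Kstar (t * h) / ft fε t‖) ^ 2)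
      ≤ (1 / ((2 * π) ^ 2 * n)) * (((cε ^ 2)⁻¹ * h ^ (-(2 * r)) * (h⁻¹ * CKs)) * max B 1) := by
        refine mul_le_mul_of_nonneg_left hmin (by positivity)
    _ = ((cε ^ 2)⁻¹ * CKs * max B 1) / (2 * π) ^ 2 * (n : ℝ)⁻¹ * h ^ (-1 - 2 * r) := by
        rw [hpow]; ring
end
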